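/- arXiv:1503.04262 — 4 statements merged into one kernel-verified Lean document; each statement's English description precedes it below -/
import Mathlib

section
/- For all ζ in the open upper half-plane, (1/(2πi)) ∫_{-∞}^{∞} e^{-u²} du/(u - ζ) = (1/2) e^{-ζ²} erfc(-iζ). -/
open Complex MeasureTheory
open Set Filter Topology

lemma aux_exp_int {b : ℂ} (hb : 0 < b.re) :
    ∫ t in Set.Ioi (0:ℝ), Complex.exp (-(b * t)) = 1 / b := by
  have hb0 : b ≠ 0 := fun h => by simp [h] at hb
  have hderiv : ∀ x ∈ Set.Ici (0:ℝ),
      HasDerivAt (fun t : ℝ => -Complex.exp (-(b * t)) / b) (Complex.exp (-(b * x))) x := by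
    intro x _
    have h1 : HasDerivAt (fun z : ℂ => -Complex.exp (-(b * z)) / b)
        (Complex.exp (-(b * (x:ℂ)))) (x:ℂ) := by
      have h2 : HasDerivAt (fun z : ℂ => -(b * z)) (-b) (x:ℂ) := by
        exact (((hasDerivAt_id (x:ℂ)).const_mul b).neg).congr_deriv (by simp)
      have h3 := (h2.cexp).neg.div_const b
      exact h3.congr_deriv (by rw [div_eq_iff hb0]; ring)
    exact h1.comp_ofReal
  have hint : IntegrableOn (fun t : ℝ => Complex.exp (-(b * t))) (Set.Ioi 0) := by
    apply Integrable.mono' (exp_neg_integrableOn_Ioi 0 hb)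
    · exact (Continuous.aestronglyMeasurable (by fun_prop))
    · filter_upwards with t
      simp [Complex.norm_exp]
  have htend : Tendsto (fun t : ℝ => -Complex.exp (-(b * t)) / b) atTop (𝓝 0) := by
    apply squeeze_zero_norm (a := fun t : ℝ => Real.exp (-(b.re * t)) / ‖b‖)
      (fun t => by simp [Complex.norm_exp])
    rw [show (0:ℝ) = 0 / ‖b‖ by simp]
    apply Tendsto.div_const
    have : Tendsto (fun t : ℝ => -(b.re * t)) atTop atBot :=
      tendsto_neg_atBot_iff.mpr (tendsto_id.const_mul_atTop hb)
    exact Real.tendsto_exp_atBot.comp this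
  have := integral_Ioi_of_hasDerivAt_of_tendsto' hderiv hint htend
  rw [this]
  simp [hb0]
  ring

lemma aux_inv_int {w : ℂ} (hw : 0 < w.im) :
    ∫ t in Set.Ioi (0:ℝ), Complex.exp (I * t * w) = I / w := by
  have hb : 0 < (-(I * w)).re := by simpa using hw
  have := aux_exp_int hb
  rw [show (∫ t in Set.Ioi (0:ℝ), Complex.exp (I * t * w))
      = ∫ t in Set.Ioi (0:ℝ), Complex.exp (-(-(I * w) * t)) by
    congr 1; funext t; ring_nf, this]
  have hw0 : w ≠ 0 := fun h => by simp [h] at hw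
  field_simp
  linear_combination (-1:ℂ) * Complex.I_sq

/-- The complementary error function along a horizontal ray. -/
noncomputable def erfc (z : ℂ) : ℂ :=
  (2 / Real.sqrt Real.pi) * ∫ t in Set.Ioi (0 : ℝ), Complex.exp (-(z + t) ^ 2)

/-- for `ζ` in the open upper half-plane,
`(1/(2πi)) ∫_ℝ e^{-u²}/(u - ζ) du = (1/2) e^{-ζ²} erfc(-iζ)`. -/
theorem stmt_4 (ζ : ℂ) (hζ : 0 < ζ.im) :
    (1 / (2 * Real.pi * I)) * ∫ u : ℝ, Complex.exp (-(u : ℂ) ^ 2) / ((u : ℂ) - ζ)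
      = (1 / 2) * Complex.exp (-ζ ^ 2) * erfc (-I * ζ) := by
  have hsq : (0:ℝ) < Real.sqrt Real.pi := Real.sqrt_pos.mpr Real.pi_pos
  set F : ℝ → ℝ → ℂ := fun u t => I * Complex.exp (-(u:ℂ)^2 + I*t*(ζ - u)) with hF
  -- Step 1: pointwise rewrite of the Cauchy kernel
  have step1 : ∀ u : ℝ, Complex.exp (-(u:ℂ)^2) / ((u:ℂ) - ζ)
      = ∫ t in Set.Ioi (0:ℝ), F u t := by
    intro u
    have hw : 0 < (ζ - (u:ℂ)).im := by simpa using hζ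
    have hne : ζ - (u:ℂ) ≠ 0 := fun h => by simp [h] at hw
    have hne' : (u:ℂ) - ζ ≠ 0 := fun h => by
      rw [sub_eq_zero] at h; rw [h] at hne; simp at hne
    have key : (∫ t in Set.Ioi (0:ℝ), F u t)
        = (Complex.exp (-(u:ℂ)^2) * I) * ∫ t in Set.Ioi (0:ℝ),
            Complex.exp (I*t*(ζ - u)) := by
      rw [← MeasureTheory.integral_const_mul]
      congr 1; funext t
      rw [hF]; simp only
      rw [show Complex.exp (-(u:ℂ)^2) * I * Complex.exp (I*(t:ℂ)*(ζ - u))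
          = I * (Complex.exp (-(u:ℂ)^2) * Complex.exp (I*(t:ℂ)*(ζ - u))) by ring,
        ← Complex.exp_add]
    rw [key, aux_inv_int hw]
    field_simp
    linear_combination (ζ - (u:ℂ)) * Complex.I_sq
  -- measurability / integrability for Fubini
  have hre : ∀ u t : ℝ, (-(u:ℂ)^2 + I*t*(ζ - u)).re = -u^2 - ζ.im*t := by
    intro u t
    simp [Complex.mul_re, Complex.mul_im, ← Complex.ofReal_pow]
    ring
  have hFmeas : AEStronglyMeasurable (Function.uncurry F)
      ((volume : Measure ℝ).prod ((volume : Measure ℝ).restrict (Set.Ioi 0))) := by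
    apply Continuous.aestronglyMeasurable
    simp only [Function.uncurry, hF]
    fun_prop
  have hFint : Integrable (Function.uncurry F)
      ((volume : Measure ℝ).prod ((volume : Measure ℝ).restrict (Set.Ioi 0))) := by
    have hbound : Integrable (fun p : ℝ × ℝ => Real.exp (-p.1^2) * Real.exp (-ζ.im * p.2))
        ((volume : Measure ℝ).prod ((volume : Measure ℝ).restrict (Set.Ioi 0))) :=
      Integrable.mul_prod (by simpa using integrable_exp_neg_mul_sq one_pos)
        (exp_neg_integrableOn_Ioi 0 hζ)
    apply hbound.mono' hFmeas
    filter_upwards with p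
    simp only [Function.uncurry, hF, norm_mul, Complex.norm_I, one_mul,
      Complex.norm_exp, hre, ← Real.exp_add]
    apply le_of_eq
    congr 1
    ring
  have swap : (∫ u : ℝ, ∫ t in Set.Ioi (0:ℝ), F u t)
      = ∫ t in Set.Ioi (0:ℝ), ∫ u : ℝ, F u t := integral_integral_swap hFint
  -- Step 3: inner Gaussian integral
  have hpow : ((Real.pi:ℂ)/1)^(1/2:ℂ) = ((Real.sqrt Real.pi : ℝ) : ℂ) := by
    rw [div_one, Real.sqrt_eq_rpow, Complex.ofReal_cpow Real.pi_pos.le]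
    norm_num
  have inner : ∀ t : ℝ, (∫ u : ℝ, F u t)
      = (I * ((Real.sqrt Real.pi : ℝ):ℂ)) * Complex.exp (I*t*ζ - (t:ℂ)^2/4) := by
    intro t
    have h1 : ∀ u : ℝ, F u t = (I * Complex.exp (I*t*ζ)) *
        (Complex.exp (I*(-t:ℂ)*u) * Complex.exp (-1*(u:ℂ)^2)) := by
      intro u
      rw [hF]; simp only
      rw [show (I * Complex.exp (I*(t:ℂ)*ζ)) *
          (Complex.exp (I*(-t:ℂ)*u) * Complex.exp (-1*(u:ℂ)^2))
          = I * Complex.exp (I*(t:ℂ)*ζ + (I*(-t:ℂ)*u + -1*(u:ℂ)^2)) by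
        rw [Complex.exp_add, Complex.exp_add]; ring]
      congr 2
      ring
    simp_rw [h1]
    rw [MeasureTheory.integral_const_mul, fourierIntegral_gaussian (by norm_num) ((-t:ℂ))]
    rw [hpow]
    rw [show I * Complex.exp (I*(t:ℂ)*ζ) *
        (((Real.sqrt Real.pi : ℝ):ℂ) * Complex.exp (-(-t:ℂ)^2/(4*1)))
        = (I * ((Real.sqrt Real.pi : ℝ):ℂ)) *
          (Complex.exp (I*(t:ℂ)*ζ) * Complex.exp (-(-t:ℂ)^2/(4*1))) by ring,
      ← Complex.exp_add]
    congr 2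
    ring
  -- Step 5: substitution t = 2s
  have sub : (∫ t in Set.Ioi (0:ℝ), Complex.exp (I*t*ζ - (t:ℂ)^2/4))
      = 2 * Complex.exp (-ζ^2) * ∫ s in Set.Ioi (0:ℝ), Complex.exp (-(-I*ζ + s)^2) := by
    have h2 := integral_comp_mul_left_Ioi
      (fun t : ℝ => Complex.exp (I*t*ζ - (t:ℂ)^2/4)) 0 two_pos
    simp only [mul_zero] at h2
    have h3 : (∫ x in Set.Ioi (0:ℝ), Complex.exp (I*((2*x:ℝ):ℂ)*ζ - ((2*x:ℝ):ℂ)^2/4))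
        = Complex.exp (-ζ^2) * ∫ s in Set.Ioi (0:ℝ), Complex.exp (-(-I*ζ + s)^2) := by
      rw [← MeasureTheory.integral_const_mul]
      congr 1; funext x
      rw [← Complex.exp_add]
      congr 1
      push_cast
      linear_combination (ζ^2) * Complex.I_sq
    rw [h3] at h2
    rw [Complex.real_smul] at h2
    push_cast at h2
    linear_combination -2 * h2
  -- Assemble
  simp_rw [step1]
  rw [swap]
  simp_rw [inner]
  rw [MeasureTheory.integral_const_mul, sub, erfc]
  have hπ : ((Real.pi : ℝ):ℂ) ≠ 0 := by
    simpa using Real.pi_ne_zero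
  have hs : ((Real.sqrt Real.pi : ℝ):ℂ) ≠ 0 := by
    simpa using hsq.ne'
  have hππ : ((Real.sqrt Real.pi : ℝ):ℂ) * ((Real.sqrt Real.pi : ℝ):ℂ) = ((Real.pi:ℝ):ℂ) := by
    rw [← Complex.ofReal_mul, Real.mul_self_sqrt Real.pi_pos.le]
  set J := ∫ s in Set.Ioi (0:ℝ), Complex.exp (-(-I*ζ + s)^2) with hJ
  field_simp
  rw [← hππ]
  ring
end

section
/- Let p_n(z) = ∑_{k=0}^n z^k/k! be the nth partial sum of the exponential series. Then p_n has no zero in the region {x + iy : x > -1 and y² ≤ 4(x+1)}, for every n ≥ 0. -/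
open Complex Finset

/-- The key real inequality: if `x+1 ≤ m*a`, `y² ≤ 4(x+1)`, `m > 0`, then
`x*a + y*b ≤ m*(a²+b²)`. -/
lemma key_ineq (x y a b m : ℝ) (hm : 0 < m) (hx : -1 < x)
    (hy : y ^ 2 ≤ 4 * (x + 1)) (ha : x + 1 ≤ m * a) :
    x * a + y * b ≤ m * (a ^ 2 + b ^ 2) := by
  have hx1 : 0 < x + 1 := by linarith
  have h1 : 0 ≤ (m * a - (x + 1)) * (m * a + 1) := by
    have : 0 < m * a := lt_of_lt_of_le hx1 ha
    apply mul_nonneg (by linarith) (by linarith)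
  nlinarith [sq_nonneg (2 * m * b - y), h1, hy, hm, mul_pos hm hm]

/-- Main induction: the partial sums are nonzero and successive ratios have
real part at least `(x+1)/(n+1)` inside the parabola. -/
lemma aux_main (z : ℂ) (hre : -1 < z.re) (him : z.im ^ 2 ≤ 4 * (z.re + 1)) :
    ∀ n : ℕ, (∑ k ∈ Finset.range (n + 1), z ^ k / (Nat.factorial k : ℂ)) ≠ 0 ∧
      (z.re + 1) / (n + 1) ≤
        ((∑ k ∈ Finset.range (n + 2), z ^ k / (Nat.factorial k : ℂ)) /
         (∑ k ∈ Finset.range (n + 1), z ^ k / (Nat.factorial k : ℂ))).re := by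
  intro n
  induction n with
  | zero =>
      constructor
      · simp
      · have h1 : (∑ k ∈ Finset.range 1, z ^ k / (Nat.factorial k : ℂ)) = 1 := by simp
        have h2 : (∑ k ∈ Finset.range 2, z ^ k / (Nat.factorial k : ℂ)) = 1 + z := by
          simp [Finset.sum_range_succ, Nat.factorial]
        rw [h1, h2]
        simp
        linarith
  | succ n ih =>
      obtain ⟨hS0, hq⟩ := ih
      set S0 := ∑ k ∈ Finset.range (n + 1), z ^ k / (Nat.factorial k : ℂ) with hS0def
      set S1 := ∑ k ∈ Finset.range (n + 2), z ^ k / (Nat.factorial k : ℂ) with hS1def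
      set S2 := ∑ k ∈ Finset.range (n + 3), z ^ k / (Nat.factorial k : ℂ) with hS2def
      set q : ℂ := S1 / S0 with hqdef
      have hx1 : 0 < z.re + 1 := by linarith
      have hcpos : 0 < (z.re + 1) / ((n : ℝ) + 1) := by positivity
      have hq0 : q ≠ 0 := by
        intro h
        rw [h] at hq
        simp at hq
        linarith
      have hS1ne : S1 ≠ 0 := by
        intro h
        apply hq0
        rw [hqdef, h, zero_div]
      refine ⟨hS1ne, ?_⟩
      have e1 : S1 - S0 = z ^ (n + 1) / (Nat.factorial (n + 1) : ℂ) := by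
        rw [hS1def, hS0def, Finset.sum_range_succ]
        ring
      have e2 : S2 = S1 + z ^ (n + 2) / (Nat.factorial (n + 2) : ℂ) := by
        rw [hS2def, hS1def, Finset.sum_range_succ]
      have hfact : ((Nat.factorial (n + 1) : ℂ)) ≠ 0 := by
        exact_mod_cast Nat.cast_ne_zero.mpr (Nat.factorial_ne_zero (n + 1))
      have hn2 : ((n : ℂ) + 2) ≠ 0 := by
        have h' : ((n : ℂ) + 2) = ((n + 2 : ℕ) : ℂ) := by push_cast; ring
        rw [h']
        exact Nat.cast_ne_zero.mpr (by omega)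
      have e3 : z ^ (n + 2) / (Nat.factorial (n + 2) : ℂ)
          = z / ((n : ℂ) + 2) * (z ^ (n + 1) / (Nat.factorial (n + 1) : ℂ)) := by
        have h' : (Nat.factorial (n + 2) : ℂ) = ((n : ℂ) + 2) * (Nat.factorial (n + 1) : ℂ) := by
          rw [Nat.factorial_succ]
          push_cast
          ring
        rw [h']
        field_simp
        ring
      have hr : S2 / S1 = 1 + z / ((n : ℂ) + 2) * (1 - q⁻¹) := by
        have hqi : q⁻¹ = S0 / S1 := by rw [hqdef, inv_div]
        rw [e2, e3, ← e1, hqi]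
        field_simp
      have hcoe : z / ((n : ℂ) + 2) * (1 - q⁻¹) = (((n : ℝ) + 2 : ℝ) : ℂ)⁻¹ * (z * (1 - q⁻¹)) := by
        push_cast
        ring
      have hns : 0 < Complex.normSq q := Complex.normSq_pos.mpr hq0
      have hnseq : Complex.normSq q = q.re ^ 2 + q.im ^ 2 := by
        rw [Complex.normSq_apply]; ring
      have hs : 0 < q.re ^ 2 + q.im ^ 2 := hnseq ▸ hns
      have hs' : q.re ^ 2 + q.im ^ 2 ≠ 0 := ne_of_gt hs
      have hw : (z * (1 - q⁻¹)).re
          = z.re - (z.re * q.re + z.im * q.im) / (q.re ^ 2 + q.im ^ 2) := by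
        rw [Complex.mul_re, Complex.sub_re, Complex.sub_im, Complex.one_re, Complex.one_im,
          Complex.inv_re, Complex.inv_im, hnseq]
        field_simp
        ring
      have hN : (0 : ℝ) < (n : ℝ) + 2 := by positivity
      have hN1 : (0 : ℝ) < (n : ℝ) + 1 := by positivity
      have hma : z.re + 1 ≤ ((n : ℝ) + 1) * q.re := by
        rw [div_le_iff₀ hN1] at hq
        linarith [hq]
      have hkey : z.re * q.re + z.im * q.im ≤ ((n : ℝ) + 1) * (q.re ^ 2 + q.im ^ 2) :=
        key_ineq z.re z.im q.re q.im ((n : ℝ) + 1) hN1 hre him hma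
      have hdiv : (z.re * q.re + z.im * q.im) / (q.re ^ 2 + q.im ^ 2) ≤ (n : ℝ) + 1 :=
        (div_le_iff₀ hs).mpr (by linarith)
      rw [hr, hcoe, Complex.add_re, Complex.one_re, ← Complex.ofReal_inv,
        Complex.re_ofReal_mul, hw]
      have hcast : ((n + 1 : ℕ) : ℝ) + 1 = (n : ℝ) + 2 := by push_cast; ring
      rw [hcast, div_le_iff₀ hN]
      have expand : (1 + ((n : ℝ) + 2)⁻¹ *
            (z.re - (z.re * q.re + z.im * q.im) / (q.re ^ 2 + q.im ^ 2))) * ((n : ℝ) + 2)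
          = (n : ℝ) + 2 + z.re - (z.re * q.re + z.im * q.im) / (q.re ^ 2 + q.im ^ 2) := by
        field_simp
        ring
      rw [expand]
      linarith

/-- Saff–Varga: no partial sum of `exp` has a zero in the
parabolic region `{x + iy : x > -1, y² ≤ 4(x+1)}`. -/
theorem stmt_9 (n : ℕ) (z : ℂ) (hre : -1 < z.re) (him : z.im ^ 2 ≤ 4 * (z.re + 1)) :
    ∑ k ∈ Finset.range (n + 1), z ^ k / (Nat.factorial k : ℂ) ≠ 0 := by
  exact (aux_main z hre him n).1
end

section
/- Every zero of the complementary error function erfc(z) = (2/√π)∫_z^∞ e^{-s²} ds lies in the open sector |arg z| < 3π/4 (equivalently, erfc has no zeros with Re(z e^{-iπ/4}) ≤ 0 on the boundary rays arg z = ±3π/4 or beyond), and erfc has no real zeros. -/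
open Complex MeasureTheory

lemma erfc_integrable (z : ℂ) :
    Integrable (fun t : ℝ => Complex.exp (-(z + t) ^ 2)) := by
  have h := integrable_cexp_quadratic (b := 1) (by norm_num) (-2 * z) (-z ^ 2)
  have e : (fun t : ℝ => Complex.exp (-(z + t) ^ 2))
      = fun x : ℝ => Complex.exp (-1 * x ^ 2 + -2 * z * x + -z ^ 2) := by
    funext t; congr 1; ring
  rw [e]; exact h

lemma erfc_full (z : ℂ) :
    ∫ t : ℝ, Complex.exp (-(z + t) ^ 2) = ((Real.sqrt Real.pi : ℝ) : ℂ) := by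
  have h := integral_cexp_quadratic (b := -1) (by norm_num) (-2 * z) (-z ^ 2)
  have e : (fun t : ℝ => Complex.exp (-(z + t) ^ 2))
      = fun x : ℝ => Complex.exp (-1 * x ^ 2 + -2 * z * x + -z ^ 2) := by
    funext t; congr 1; ring
  rw [e, h]
  have h0 : (-z ^ 2 - (-2 * z) ^ 2 / (4 * (-1 : ℂ))) = 0 := by ring
  rw [h0, Complex.exp_zero, mul_one]
  have : ((Real.sqrt Real.pi : ℝ) : ℂ) = (Real.pi : ℂ) ^ ((1 / 2 : ℝ) : ℂ) := by
    rw [Real.sqrt_eq_rpow, Complex.ofReal_cpow Real.pi_pos.le]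
  rw [this]
  norm_num

lemma erfc_bound {w : ℂ} (hw : |w.im| ≤ w.re) :
    ‖∫ t in Set.Ioi (0 : ℝ), Complex.exp (-(w + t) ^ 2)‖ ≤ Real.sqrt Real.pi / 2 := by
  have hg : IntegrableOn (fun t : ℝ => Real.exp (-1 * t ^ 2)) (Set.Ioi 0) :=
    (integrable_exp_neg_mul_sq one_pos).integrableOn
  have h0 : 0 ≤ w.re := (abs_nonneg _).trans hw
  have him : w.im ^ 2 ≤ w.re ^ 2 := by
    rw [← _root_.sq_abs]; exact pow_le_pow_left₀ (abs_nonneg _) hw 2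
  have hb : ‖∫ t in Set.Ioi (0 : ℝ), Complex.exp (-(w + t) ^ 2)‖
      ≤ ∫ t in Set.Ioi (0 : ℝ), Real.exp (-1 * t ^ 2) := by
    refine norm_integral_le_of_norm_le hg ?_
    filter_upwards [ae_restrict_mem measurableSet_Ioi] with t ht
    have hre : (-(w + (t : ℂ)) ^ 2).re = w.im ^ 2 - (w.re + t) ^ 2 := by
      simp [pow_two, Complex.mul_re]
    rw [Complex.norm_exp, hre]
    apply Real.exp_le_exp.mpr
    have ht' : (0 : ℝ) < t := ht
    nlinarith
  have : ∫ t in Set.Ioi (0 : ℝ), Real.exp (-1 * t ^ 2) = Real.sqrt Real.pi / 2 := by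
    simpa using integral_gaussian_Ioi 1
  linarith [hb, this.le, this.ge]

lemma erfc_ne_zero_of_left {z : ℂ} (hz : |z.im| ≤ -z.re) : erfc z ≠ 0 := by
  intro h0
  have hsp : (0 : ℝ) < Real.sqrt Real.pi := Real.sqrt_pos.mpr Real.pi_pos
  have hc : ((2 : ℂ) / (Real.sqrt Real.pi : ℝ)) ≠ 0 := by
    apply div_ne_zero two_ne_zero
    exact_mod_cast hsp.ne'
  have hI : ∫ t in Set.Ioi (0 : ℝ), Complex.exp (-(z + t) ^ 2) = 0 := by
    rcases mul_eq_zero.mp h0 with h | h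
    · exact absurd h hc
    · exact h
  have hsplit := intervalIntegral.integral_Iic_add_Ioi (b := (0 : ℝ))
    ((erfc_integrable z).integrableOn) ((erfc_integrable z).integrableOn)
  rw [hI, add_zero, erfc_full z] at hsplit
  have hflip : ∫ t in Set.Ioi (0 : ℝ), Complex.exp (-((-z) + t) ^ 2)
      = ∫ t in Set.Iic (0 : ℝ), Complex.exp (-(z + t) ^ 2) := by
    have h := integral_comp_neg_Ioi (0 : ℝ) (fun t : ℝ => Complex.exp (-(z + t) ^ 2))
    rw [neg_zero] at h
    rw [← h]
    congr 1; funext t; congr 1; push_cast; ring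
  have hval : ∫ t in Set.Ioi (0 : ℝ), Complex.exp (-((-z) + t) ^ 2)
      = ((Real.sqrt Real.pi : ℝ) : ℂ) := by rw [hflip, hsplit]
  have hwb : |(-z).im| ≤ (-z).re := by
    simpa using hz
  have := erfc_bound hwb
  rw [hval] at this
  rw [Complex.norm_real, Real.norm_eq_abs, _root_.abs_of_nonneg (Real.sqrt_nonneg _)] at this
  linarith

/-- every zero of `erfc` lies in the open sector `|arg z| < 3π/4`,
and `erfc` has no real zeros. -/
theorem stmt_15 :
    (∀ z : ℂ, erfc z = 0 → |Complex.arg z| < 3 * Real.pi / 4) ∧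
    (∀ x : ℝ, erfc (x : ℂ) ≠ 0) := by
  constructor
  · intro z hz0
    have hlt : -z.re < |z.im| :=
      not_le.mp fun hle => erfc_ne_zero_of_left hle hz0
    have hz : z ≠ 0 := by rintro rfl; simp at hlt
    have hr : 0 < ‖z‖ := norm_pos_iff.mpr hz
    set r := ‖z‖ with hrdef
    have hr2 : r ^ 2 = z.re ^ 2 + z.im ^ 2 := by
      rw [hrdef, Complex.sq_norm, Complex.normSq_apply]; ring
    have h2 : (0 : ℝ) < Real.sqrt 2 := Real.sqrt_pos.mpr (by norm_num)
    have hs2 : Real.sqrt 2 ^ 2 = 2 := Real.sq_sqrt (by norm_num)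
    have hcos34 : Real.cos (3 * Real.pi / 4) = -(Real.sqrt 2 / 2) := by
      have : (3 * Real.pi / 4) = Real.pi - Real.pi / 4 := by ring
      rw [this, Real.cos_pi_sub, Real.cos_pi_div_four]
    have hkey : -(Real.sqrt 2 / 2) < z.re / r := by
      rcases le_or_gt 0 z.re with hre | hre
      · have : 0 ≤ z.re / r := div_nonneg hre hr.le
        nlinarith
      · have him : z.re ^ 2 < z.im ^ 2 := by
          nlinarith [_root_.sq_abs z.im, abs_nonneg z.im]
        rw [lt_div_iff₀ hr]
        have key : 0 < Real.sqrt 2 * r - 2 * z.re := by nlinarith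
        nlinarith
    have hcoslt : Real.cos (3 * Real.pi / 4) < Real.cos |Complex.arg z| := by
      rw [Real.cos_abs, Complex.cos_arg hz, hcos34]
      exact hkey
    by_contra hge
    push_neg at hge
    have := Real.cos_le_cos_of_nonneg_of_le_pi
      (by positivity) (Complex.abs_arg_le_pi z) hge
    linarith
  · intro x
    have hre : Integrable (fun t : ℝ => Real.exp (-(x + t) ^ 2)) := by
      have h := (integrable_exp_neg_mul_sq one_pos).comp_add_right x
      have e : (fun t : ℝ => Real.exp (-(x + t) ^ 2))
          = fun t : ℝ => Real.exp (-1 * (t + x) ^ 2) := by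
        funext t; congr 1; ring
      rw [e]; exact h
    have hpos : 0 < ∫ t in Set.Ioi (0 : ℝ), Real.exp (-(x + t) ^ 2) := by
      rw [setIntegral_pos_iff_support_of_nonneg_ae
        (Filter.Eventually.of_forall fun t => (Real.exp_pos _).le) hre.integrableOn]
      have hsupp : (Function.support fun t : ℝ => Real.exp (-(x + t) ^ 2)) = Set.univ := by
        ext t; simp [(Real.exp_pos (-(x + t) ^ 2)).ne']
      rw [hsupp, Set.univ_inter, Real.volume_Ioi]
      norm_num
    have heq : ∫ t in Set.Ioi (0 : ℝ), Complex.exp (-((x : ℂ) + t) ^ 2)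
        = ((∫ t in Set.Ioi (0 : ℝ), Real.exp (-(x + t) ^ 2) : ℝ) : ℂ) := by
      have e : (fun t : ℝ => Complex.exp (-((x : ℂ) + t) ^ 2))
          = fun t : ℝ => ((Real.exp (-(x + t) ^ 2) : ℝ) : ℂ) := by
        funext t
        rw [Complex.ofReal_exp]
        congr 1; push_cast; ring
      rw [e]
      exact integral_ofReal
    rw [erfc, heq]
    apply mul_ne_zero
    · apply div_ne_zero two_ne_zero
      exact_mod_cast (Real.sqrt_pos.mpr Real.pi_pos).ne'
    · exact_mod_cast hpos.ne'
end

section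
/- Let λ > 0, r_n = (n/λ)^{1/λ}, and suppose f(z) = z^a (log z)^b exp(z^λ)(1 + o(1)) uniformly as |z| → ∞ in |arg z| ≤ θ. Then for z in a compact subset of {z ≠ 0 : |arg z| ≤ θ}, f(r_n z)/(r_n^a (log r_n)^b (e^{1/λ} z)^n) = z^a e^{nφ(z)} (1 + log z/log r_n)^b (1 + o(1)) as n → ∞, where φ(z) = (z^λ - 1 - log z^λ)/λ; in particular this ratio is asymptotic to z^a e^{nφ(z)} for fixed z. -/
open Complex Filter Topology

/-- `φ(z) = (z^λ - 1 - log z^λ)/λ`, principal branches. -/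
noncomputable def phi (lam : ℝ) (z : ℂ) : ℂ :=
  (z ^ (lam : ℂ) - 1 - Complex.log (z ^ (lam : ℂ))) / (lam : ℂ)

/-- `r_n = (n/λ)^{1/λ}`. -/
noncomputable def rn (lam : ℝ) (n : ℕ) : ℝ := ((n : ℝ) / lam) ^ (1 / lam)

lemma aux_mul_cpow {x : ℝ} (hx : 0 < x) {z : ℂ} (hz : z ≠ 0) (w : ℂ) :
    ((x : ℂ) * z) ^ w = (x : ℂ) ^ w * z ^ w := by
  have hx0 : (x : ℂ) ≠ 0 := by exact_mod_cast hx.ne'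
  rw [Complex.cpow_def_of_ne_zero (mul_ne_zero hx0 hz),
      Complex.cpow_def_of_ne_zero hx0, Complex.cpow_def_of_ne_zero hz,
      Complex.log_ofReal_mul hx hz, add_mul, Complex.exp_add,
      Complex.ofReal_log hx.le]

lemma aux_log_cpow {lam : ℝ} {z : ℂ} (hz : z ≠ 0)
    (h1 : -Real.pi < lam * Complex.arg z) (h2 : lam * Complex.arg z ≤ Real.pi) :
    Complex.log (z ^ (lam : ℂ)) = (lam : ℂ) * Complex.log z := by
  rw [Complex.cpow_def_of_ne_zero hz, Complex.log_exp, mul_comm]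
  · simpa [Complex.log_im, mul_comm] using h1
  · simpa [Complex.log_im, mul_comm] using h2

lemma rn_tendsto {lam : ℝ} (hlam : 0 < lam) :
    Tendsto (fun n : ℕ => rn lam n) atTop atTop := by
  have h1 : Tendsto (fun n : ℕ => (n : ℝ) / lam) atTop atTop :=
    (tendsto_natCast_atTop_atTop).atTop_div_const hlam
  exact (tendsto_rpow_atTop (by positivity : (0:ℝ) < 1 / lam)).comp h1

lemma key_eq {lam θ : ℝ} (hlam : 0 < lam) (hθ' : θ < Real.pi / lam) (a b : ℂ)
    {n : ℕ} (hr : 1 < rn lam n) {z : ℂ} (hz : z ≠ 0) (harg : |Complex.arg z| ≤ θ)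
    (hw : 1 + Complex.log z / Complex.log ((rn lam n : ℝ) : ℂ) ≠ 0) :
    ((rn lam n : ℂ) * z) ^ a * Complex.log ((rn lam n : ℂ) * z) ^ b *
      Complex.exp (((rn lam n : ℂ) * z) ^ (lam : ℂ))
    = ((rn lam n : ℂ) ^ a * Complex.log (rn lam n : ℂ) ^ b *
        ((Real.exp (1 / lam) : ℂ) * z) ^ n) *
      (z ^ a * Complex.exp ((n : ℂ) * phi lam z) *
        (1 + Complex.log z / Complex.log (rn lam n : ℂ)) ^ b) := by
  set r := rn lam n with hrdef
  have hr0 : (0:ℝ) < r := lt_trans one_pos hr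
  have hL : 0 < Real.log r := Real.log_pos hr
  have hlc : (lam : ℂ) ≠ 0 := ofReal_ne_zero.mpr hlam.ne'
  have hlogr : Complex.log (r:ℂ) = ((Real.log r : ℝ):ℂ) := (Complex.ofReal_log hr0.le).symm
  have hLc : ((Real.log r : ℝ):ℂ) ≠ 0 := ofReal_ne_zero.mpr hL.ne'
  have hw' : 1 + Complex.log z / ((Real.log r : ℝ):ℂ) ≠ 0 := by rwa [hlogr] at hw
  have hA : ((r:ℂ)*z)^a = (r:ℂ)^a * z^a := aux_mul_cpow hr0 hz a
  have hlogmul : Complex.log ((r:ℂ)*z) = ((Real.log r : ℝ):ℂ) + Complex.log z :=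
    Complex.log_ofReal_mul hr0 hz
  have hfac : ((Real.log r : ℝ):ℂ) + Complex.log z
      = ((Real.log r : ℝ):ℂ) * (1 + Complex.log z / ((Real.log r : ℝ):ℂ)) := by
    field_simp
  have hB : Complex.log ((r:ℂ)*z)^b
      = ((Real.log r : ℝ):ℂ)^b * (1 + Complex.log z / ((Real.log r : ℝ):ℂ))^b := by
    rw [hlogmul, hfac]; exact aux_mul_cpow hL hw' b
  have hreal : r ^ lam = (n:ℝ)/lam := by
    rw [hrdef, rn, ← Real.rpow_mul (by positivity), one_div_mul_cancel hlam.ne',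
      Real.rpow_one]
  have hrlam : (r:ℂ)^(lam:ℂ) = (((n:ℝ)/lam : ℝ):ℂ) := by
    rw [← Complex.ofReal_cpow hr0.le, hreal]
  have hC : ((r:ℂ)*z)^(lam:ℂ) = ((n:ℂ)/(lam:ℂ)) * z^(lam:ℂ) := by
    rw [aux_mul_cpow hr0 hz, hrlam]; push_cast; ring
  have hE : ((Real.exp (1/lam) : ℂ)*z)^n = Complex.exp ((n:ℂ)*(1/(lam:ℂ))) * z^n := by
    rw [mul_pow, Complex.ofReal_exp, ← Complex.exp_nat_mul]
    push_cast; ring_nf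
  have hzn : z^n = Complex.exp ((n:ℂ) * Complex.log z) := by
    conv_lhs => rw [← Complex.exp_log hz]
    rw [← Complex.exp_nat_mul]
  have harglt : |lam * Complex.arg z| < Real.pi := by
    rw [abs_mul, abs_of_pos hlam]
    calc lam * |Complex.arg z| ≤ lam * θ := by
          exact mul_le_mul_of_nonneg_left harg hlam.le
      _ < lam * (Real.pi / lam) := by
          exact mul_lt_mul_of_pos_left hθ' hlam
      _ = Real.pi := by field_simp
  have hlogzl : Complex.log (z^(lam:ℂ)) = (lam:ℂ) * Complex.log z :=
    aux_log_cpow hz (abs_lt.mp harglt).1 (abs_lt.mp harglt).2.le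
  have hnphi : (n:ℂ) * phi lam z
      = (n:ℂ)/(lam:ℂ) * z^(lam:ℂ) - (n:ℂ)*(1/(lam:ℂ)) - (n:ℂ)*Complex.log z := by
    rw [phi, hlogzl]; field_simp
  have hexp : Complex.exp ((n:ℂ)/(lam:ℂ) * z^(lam:ℂ))
      = Complex.exp ((n:ℂ)*(1/(lam:ℂ))) * Complex.exp ((n:ℂ)*Complex.log z) *
        Complex.exp ((n:ℂ)*phi lam z) := by
    rw [← Complex.exp_add, ← Complex.exp_add, hnphi]; ring_nf
  rw [hA, hB, hC, hE, hzn, hlogr, hexp]; ring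

lemma cpow_ne {w : ℂ} (hw : w ≠ 0) (s : ℂ) : w ^ s ≠ 0 := by
  rw [Complex.cpow_def_of_ne_zero hw]; exact Complex.exp_ne_zero _

lemma norm_log_le_aux {c C : ℝ} (hc : 0 < c) {z : ℂ} (h1 : c ≤ ‖z‖) (h2 : ‖z‖ ≤ C) :
    ‖Complex.log z‖ ≤ |Real.log c| + |Real.log C| + Real.pi := by
  calc ‖Complex.log z‖ ≤ |(Complex.log z).re| + |(Complex.log z).im| :=
        Complex.norm_le_abs_re_add_abs_im _
    _ = |Real.log ‖z‖| + |Complex.arg z| := by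
        rw [Complex.log_re, Complex.log_im]
    _ ≤ (|Real.log c| + |Real.log C|) + Real.pi := by
        refine add_le_add ?_ (Complex.abs_arg_le_pi z)
        refine abs_le.mpr ⟨?_, ?_⟩
        · calc -(|Real.log c| + |Real.log C|) ≤ -|Real.log c| := by
                simp [abs_nonneg]
            _ ≤ Real.log c := neg_abs_le _
            _ ≤ Real.log ‖z‖ := Real.log_le_log hc h1
        · calc Real.log ‖z‖ ≤ Real.log C := Real.log_le_log (lt_of_lt_of_le hc h1) h2
            _ ≤ |Real.log C| := le_abs_self _
            _ ≤ |Real.log c| + |Real.log C| := by simp [abs_nonneg]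
    _ = |Real.log c| + |Real.log C| + Real.pi := by ring

lemma part1 (lam θ : ℝ) (a b : ℂ) (f : ℂ → ℂ)
    (hlam : 0 < lam) (hθpl : θ < Real.pi / lam)
    (hasym : ∀ δ : ℝ, 0 < δ → ∃ R : ℝ, ∀ z : ℂ, R ≤ ‖z‖ → |Complex.arg z| ≤ θ →
      ‖f z - z ^ a * Complex.log z ^ b * Complex.exp (z ^ (lam : ℂ))‖
        ≤ δ * ‖z ^ a * Complex.log z ^ b * Complex.exp (z ^ (lam : ℂ))‖)
    (K : Set ℂ) (hK : IsCompact K) (hKs : K ⊆ {z : ℂ | z ≠ 0 ∧ |Complex.arg z| ≤ θ}) :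
    TendstoUniformlyOn
        (fun (n : ℕ) (z : ℂ) =>
          f ((rn lam n : ℂ) * z) /
              ((rn lam n : ℂ) ^ a * Complex.log (rn lam n : ℂ) ^ b *
                ((Real.exp (1 / lam) : ℂ) * z) ^ n) /
            (z ^ a * Complex.exp ((n : ℂ) * phi lam z) *
              (1 + Complex.log z / Complex.log (rn lam n : ℂ)) ^ b))
        (fun _ => (1 : ℂ)) atTop K := by
  rcases K.eq_empty_or_nonempty with hKe | hne
  · subst hKe; exact tendstoUniformlyOn_empty
  obtain ⟨z0, hz0K, hz0min'⟩ := hK.exists_isMinOn hne continuous_norm.continuousOn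
  obtain ⟨z1, hz1K, hz1max'⟩ := hK.exists_isMaxOn hne continuous_norm.continuousOn
  have hz0min : ∀ y ∈ K, ‖z0‖ ≤ ‖y‖ := fun y hy => hz0min' hy
  have hz1max : ∀ y ∈ K, ‖y‖ ≤ ‖z1‖ := fun y hy => hz1max' hy
  set c : ℝ := ‖z0‖ with hcdef
  have hc : 0 < c := norm_pos_iff.mpr (hKs hz0K).1
  set C : ℝ := ‖z1‖ with hCdef
  set M : ℝ := |Real.log c| + |Real.log C| + Real.pi with hMdef
  have hM0 : 0 ≤ M := by
    have := Real.pi_pos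
    have := abs_nonneg (Real.log c); have := abs_nonneg (Real.log C)
    positivity
  have hMlog : ∀ z ∈ K, ‖Complex.log z‖ ≤ M :=
    fun z hzK => norm_log_le_aux hc (hz0min z hzK) (hz1max z hzK)
  rw [Metric.tendstoUniformlyOn_iff]
  intro ε hε
  obtain ⟨R, hR⟩ := hasym (ε/2) (half_pos hε)
  filter_upwards [(rn_tendsto hlam).eventually_ge_atTop
    (max (max 2 ((|R|+1)/c)) (Real.exp (2*M+1)))] with n hn z hzK
  obtain ⟨hz, harg⟩ := hKs hzK
  set r : ℝ := rn lam n with hrdef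
  have hr2 : 2 ≤ r := le_trans (le_trans (le_max_left _ _) (le_max_left _ _)) hn
  have hrRc : (|R|+1)/c ≤ r := le_trans (le_trans (le_max_right _ _) (le_max_left _ _)) hn
  have hrE : Real.exp (2*M+1) ≤ r := le_trans (le_max_right _ _) hn
  have hr1 : 1 < r := lt_of_lt_of_le one_lt_two hr2
  have hr0 : (0:ℝ) < r := lt_trans one_pos hr1
  have hLbig : 2*M+1 ≤ Real.log r := by
    rw [← Real.log_exp (2*M+1)]; exact Real.log_le_log (Real.exp_pos _) hrE
  have hL0 : 0 < Real.log r := lt_of_lt_of_le (by positivity) hLbig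
  have hlogr : Complex.log (r:ℂ) = ((Real.log r : ℝ):ℂ) := (Complex.ofReal_log hr0.le).symm
  have hwnorm : ‖Complex.log z / Complex.log (r:ℂ)‖ < 1 := by
    rw [norm_div, hlogr, Complex.norm_real, Real.norm_eq_abs, abs_of_pos hL0, div_lt_one hL0]
    calc ‖Complex.log z‖ ≤ M := hMlog z hzK
      _ < 2*M+1 := by linarith
      _ ≤ Real.log r := hLbig
  have hw : 1 + Complex.log z / Complex.log (r:ℂ) ≠ 0 := by
    intro h
    have h2 : Complex.log z / Complex.log (r:ℂ) = -1 := by linear_combination h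
    rw [h2] at hwnorm; simp at hwnorm
  have hkey := key_eq hlam hθpl a b hr1 hz harg hw
  have hD0 : ((r:ℂ) ^ a * Complex.log (r:ℂ) ^ b *
      ((Real.exp (1 / lam) : ℂ) * z) ^ n) ≠ 0 := by
    refine mul_ne_zero (mul_ne_zero ?_ ?_) ?_
    · exact cpow_ne (ofReal_ne_zero.mpr hr0.ne') a
    · refine cpow_ne ?_ b
      rw [hlogr]; exact ofReal_ne_zero.mpr hL0.ne'
    · exact pow_ne_zero _ (mul_ne_zero (ofReal_ne_zero.mpr (Real.exp_pos _).ne') hz)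
  have hT0 : (z ^ a * Complex.exp ((n : ℂ) * phi lam z) *
      (1 + Complex.log z / Complex.log (r:ℂ)) ^ b) ≠ 0 :=
    mul_ne_zero (mul_ne_zero (cpow_ne hz a) (Complex.exp_ne_zero _)) (cpow_ne hw b)
  have hg0 : ((r:ℂ) * z) ^ a * Complex.log ((r:ℂ) * z) ^ b *
      Complex.exp (((r:ℂ) * z) ^ (lam : ℂ)) ≠ 0 := by
    rw [hkey]; exact mul_ne_zero hD0 hT0
  have hnormrz : R ≤ ‖(r:ℂ) * z‖ := by
    rw [norm_mul, Complex.norm_real, Real.norm_eq_abs, abs_of_pos hr0]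
    calc R ≤ |R| + 1 := by have := le_abs_self R; linarith
      _ = ((|R|+1)/c) * c := by field_simp
      _ ≤ r * ‖z‖ := by
          apply mul_le_mul hrRc (hz0min z hzK) hc.le hr0.le
  have hargrz : |Complex.arg ((r:ℂ) * z)| ≤ θ := by
    rw [Complex.arg_real_mul z hr0]; exact harg
  have hfb := hR ((r:ℂ) * z) hnormrz hargrz
  rw [div_div, dist_comm, dist_eq_norm, ← hkey]
  set g : ℂ := ((r:ℂ) * z) ^ a * Complex.log ((r:ℂ) * z) ^ b *
      Complex.exp (((r:ℂ) * z) ^ (lam : ℂ)) with hgdef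
  have hgn : 0 < ‖g‖ := norm_pos_iff.mpr hg0
  rw [div_sub_one hg0, norm_div]
  calc ‖f ((r:ℂ)*z) - g‖ / ‖g‖ ≤ (ε/2 * ‖g‖) / ‖g‖ := by
        exact div_le_div_of_nonneg_right hfb hgn.le
    _ = ε/2 := by rw [mul_div_assoc, div_self hgn.ne', mul_one]
    _ < ε := by linarith

/-- re-scaled asymptotics of `f` along the contour: for `f` with
`f(z) = z^a (log z)^b e^{z^λ}(1 + o(1))` uniformly in the sector `|arg z| ≤ θ`,
one has `f(r_n z)/(r_n^a (log r_n)^b (e^{1/λ} z)^n)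
  = z^a e^{nφ(z)} (1 + log z/log r_n)^b (1 + o(1))` uniformly on compact subsets
of the punctured sector, and in particular, for each fixed `z` there, the ratio
is asymptotic to `z^a e^{nφ(z)}`. -/
theorem stmt_19 (lam θ : ℝ) (a b : ℂ) (f : ℂ → ℂ)
    (hlam : 0 < lam) (hθ : 0 < θ) (hθ' : θ < min Real.pi (Real.pi / lam))
    (hasym : ∀ δ : ℝ, 0 < δ → ∃ R : ℝ, ∀ z : ℂ, R ≤ ‖z‖ → |Complex.arg z| ≤ θ →
      ‖f z - z ^ a * Complex.log z ^ b * Complex.exp (z ^ (lam : ℂ))‖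
        ≤ δ * ‖z ^ a * Complex.log z ^ b * Complex.exp (z ^ (lam : ℂ))‖) :
    (∀ K : Set ℂ, IsCompact K → K ⊆ {z : ℂ | z ≠ 0 ∧ |Complex.arg z| ≤ θ} →
      TendstoUniformlyOn
        (fun (n : ℕ) (z : ℂ) =>
          f ((rn lam n : ℂ) * z) /
              ((rn lam n : ℂ) ^ a * Complex.log (rn lam n : ℂ) ^ b *
                ((Real.exp (1 / lam) : ℂ) * z) ^ n) /
            (z ^ a * Complex.exp ((n : ℂ) * phi lam z) *
              (1 + Complex.log z / Complex.log (rn lam n : ℂ)) ^ b))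
        (fun _ => (1 : ℂ)) atTop K) ∧
    (∀ z : ℂ, z ≠ 0 → |Complex.arg z| ≤ θ →
      Tendsto
        (fun n : ℕ =>
          f ((rn lam n : ℂ) * z) /
              ((rn lam n : ℂ) ^ a * Complex.log (rn lam n : ℂ) ^ b *
                ((Real.exp (1 / lam) : ℂ) * z) ^ n) /
            (z ^ a * Complex.exp ((n : ℂ) * phi lam z)))
        atTop (𝓝 1)) := by
  have hθpl : θ < Real.pi / lam := lt_of_lt_of_le hθ' (min_le_right _ _)
  refine ⟨fun K hK hKs => part1 lam θ a b f hlam hθpl hasym K hK hKs, ?_⟩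
  intro z hz harg
  have hsub : {z} ⊆ {w : ℂ | w ≠ 0 ∧ |Complex.arg w| ≤ θ} := by
    intro w hw
    simp only [Set.mem_singleton_iff] at hw
    subst hw; exact ⟨hz, harg⟩
  have h1 := (part1 lam θ a b f hlam hθpl hasym {z} isCompact_singleton hsub).tendsto_at
    (Set.mem_singleton z)
  have hLt : Tendsto (fun n : ℕ => Real.log (rn lam n)) atTop atTop :=
    Real.tendsto_log_atTop.comp (rn_tendsto hlam)
  have hw0 : Tendsto (fun n : ℕ => Complex.log z / Complex.log ((rn lam n : ℝ):ℂ))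
      atTop (𝓝 0) := by
    have hbnd : ∀ᶠ n : ℕ in atTop,
        ‖Complex.log z / Complex.log ((rn lam n : ℝ):ℂ)‖
          ≤ ‖Complex.log z‖ / Real.log (rn lam n) := by
      filter_upwards [(rn_tendsto hlam).eventually_ge_atTop 2] with n h2
      have hr0 : (0:ℝ) < rn lam n := by linarith
      have hL0 : 0 < Real.log (rn lam n) := Real.log_pos (by linarith)
      rw [norm_div, ← Complex.ofReal_log hr0.le, Complex.norm_real, Real.norm_eq_abs,
        abs_of_pos hL0]
    exact squeeze_zero_norm' hbnd (tendsto_const_nhds.div_atTop hLt)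
  have hwten : Tendsto (fun n : ℕ => 1 + Complex.log z / Complex.log ((rn lam n : ℝ):ℂ))
      atTop (𝓝 1) := by
    simpa using tendsto_const_nhds.add hw0
  have hpow : Tendsto (fun n : ℕ =>
      (1 + Complex.log z / Complex.log ((rn lam n : ℝ):ℂ)) ^ b) atTop (𝓝 1) := by
    have hcont : ContinuousAt (fun w : ℂ => w ^ b) 1 :=
      continuousAt_cpow_const Complex.one_mem_slitPlane
    have := hcont.tendsto.comp hwten
    simpa [Complex.one_cpow, Function.comp_def] using this
  have heq : ∀ᶠ n : ℕ in atTop,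
      (f ((rn lam n : ℂ) * z) /
          ((rn lam n : ℂ) ^ a * Complex.log (rn lam n : ℂ) ^ b *
            ((Real.exp (1 / lam) : ℂ) * z) ^ n) /
        (z ^ a * Complex.exp ((n : ℂ) * phi lam z) *
          (1 + Complex.log z / Complex.log (rn lam n : ℂ)) ^ b)) *
        (1 + Complex.log z / Complex.log ((rn lam n : ℝ):ℂ)) ^ b
      = f ((rn lam n : ℂ) * z) /
          ((rn lam n : ℂ) ^ a * Complex.log (rn lam n : ℂ) ^ b *
            ((Real.exp (1 / lam) : ℂ) * z) ^ n) /
        (z ^ a * Complex.exp ((n : ℂ) * phi lam z)) := by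
    filter_upwards [hwten.eventually_ne one_ne_zero] with n hne0
    have hb0 : (1 + Complex.log z / Complex.log ((rn lam n : ℝ):ℂ)) ^ b ≠ 0 :=
      cpow_ne hne0 b
    rw [← div_div, div_mul_cancel₀ _ hb0]
  have := (h1.mul hpow).congr' heq
  simpa using this
end
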